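/- Let α : ℕ → ℕ with α(n) ≥ 1 and let w be a real number. Then ∑_{σ ∈ S_{n,α}} w^{C(σ)} = n! · [z^n] exp( w·∑_{j=1}^{α(n)} z^j/j ), where [z^n] denotes the coefficient of z^n in the formal power series exp( w·∑_{j=1}^{α(n)} z^j/j ) ∈ ℝ⟦z⟧. In particular (taking w = 1), the cardinality of S_{n,α} equals n! · [z^n] exp( ∑_{j=1}^{α(n)} z^j/j ). -/

import Mathlib

open scoped Classical in
/-- `S_{n,a}`: the set of permutations of `{1,…,n}` all of whose cycles have length
at most `a`. -/
noncomputable def Snalpha (n a : ℕ) : Finset (Equiv.Perm (Fin n)) :=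
  Finset.univ.filter fun σ => ∀ c ∈ σ.cycleType, c ≤ a

/-- `C(σ)`: the total number of cycles of a permutation (nontrivial cycles plus
fixed points). -/
def numCycles {n : ℕ} (σ : Equiv.Perm (Fin n)) : ℕ :=
  σ.cycleType.card + (Finset.univ.filter fun i => σ i = i).card

/-- The formal exponential of a power series with zero constant term: since `f ^ k`
has order at least `k` when the constant term of `f` vanishes, the coefficient of
`z^n` in `exp f = ∑_k f^k / k!` is that of the finite sum `∑_{k ≤ n} f^k / k!`. -/
noncomputable def expPS (f : PowerSeries ℝ) : PowerSeries ℝ :=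
  PowerSeries.mk fun n =>
    PowerSeries.coeff n (∑ k ∈ Finset.range (n + 1), (k.factorial : ℝ)⁻¹ • f ^ k)

section Aux

open Finset PowerSeries

lemma coeff_sum_range (f : PowerSeries ℝ) (hf : constantCoeff f = 0) {m M : ℕ} (h : m ≤ M) :
    PowerSeries.coeff m (∑ k ∈ Finset.range (M + 1), (k.factorial : ℝ)⁻¹ • f ^ k)
      = PowerSeries.coeff m (expPS f) := by
  rw [expPS, PowerSeries.coeff_mk]
  have : Finset.range (M + 1) = Finset.range (m+1) ∪ Finset.Ico (m+1) (M+1) := by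
    rw [Finset.range_eq_Ico, Finset.range_eq_Ico, Finset.Ico_union_Ico_eq_Ico (by omega) (by omega)]
  rw [this, Finset.sum_union (by
    simp only [Finset.range_eq_Ico, Finset.disjoint_left, Finset.mem_Ico]
    intro k hk hk2; omega)]
  rw [map_add]
  have hz : PowerSeries.coeff m (∑ k ∈ Finset.Ico (m+1) (M+1), (k.factorial : ℝ)⁻¹ • f ^ k) = 0 := by
    rw [map_sum]
    refine Finset.sum_eq_zero fun k hk => ?_
    rw [Finset.mem_Ico] at hk
    have hd : (PowerSeries.X : PowerSeries ℝ) ^ k ∣ f ^ k :=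
      pow_dvd_pow_of_dvd (PowerSeries.X_dvd_iff.mpr hf) k
    rw [map_smul, PowerSeries.X_pow_dvd_iff.mp hd m (by omega), smul_zero]
  rw [hz, add_zero]

lemma expPS_coeff_zero (f : PowerSeries ℝ) : PowerSeries.coeff 0 (expPS f) = 1 := by
  simp [expPS]

noncomputable def gS (a : ℕ) : PowerSeries ℝ :=
  ∑ j ∈ Finset.Icc 1 a, PowerSeries.C (j : ℝ)⁻¹ * PowerSeries.X ^ j

lemma coeff_gS (a i : ℕ) : PowerSeries.coeff i (gS a)
    = if i ∈ Finset.Icc 1 a then (i : ℝ)⁻¹ else 0 := by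
  rw [gS, map_sum]
  have : ∀ j ∈ Finset.Icc 1 a, PowerSeries.coeff i (PowerSeries.C (j : ℝ)⁻¹ * PowerSeries.X ^ j)
      = if j = i then (j : ℝ)⁻¹ else 0 := by
    intro j _
    rw [PowerSeries.coeff_C_mul, PowerSeries.coeff_X_pow]
    by_cases h : i = j <;> simp [h, eq_comm]
  rw [Finset.sum_congr rfl this, Finset.sum_ite_eq' (Finset.Icc 1 a) i (fun j => (j:ℝ)⁻¹)]

lemma constC (a : ℕ) (w : ℝ) : constantCoeff (PowerSeries.C w * gS a) = 0 := by
  have := coeff_gS a 0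
  simp only [Finset.mem_Icc] at this
  rw [map_mul, constantCoeff_C, ← PowerSeries.coeff_zero_eq_constantCoeff_apply, this]
  simp

lemma coeff_D (a : ℕ) (w : ℝ) (i : ℕ) :
    PowerSeries.coeff i (PowerSeries.derivative ℝ (PowerSeries.C w * gS a))
      = if i + 1 ≤ a then w else 0 := by
  rw [PowerSeries.coeff_derivative, PowerSeries.coeff_C_mul, coeff_gS]
  have h1 : (1:ℕ) ≤ i + 1 := by omega
  by_cases h : i + 1 ≤ a
  · rw [if_pos (Finset.mem_Icc.mpr ⟨h1, h⟩), if_pos h]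
    have : ((i:ℝ) + 1) ≠ 0 := by positivity
    push_cast
    field_simp
  · rw [if_neg (by rw [Finset.mem_Icc]; omega), if_neg h, mul_zero, zero_mul]

lemma expPS_deriv_sum (f : PowerSeries ℝ) (m : ℕ) :
    PowerSeries.derivative ℝ (∑ k ∈ Finset.range (m + 2), (k.factorial : ℝ)⁻¹ • f ^ k)
      = (∑ k ∈ Finset.range (m + 1), (k.factorial : ℝ)⁻¹ • f ^ k) * PowerSeries.derivative ℝ f := by
  rw [map_sum]
  rw [Finset.sum_range_succ' _ (m+1)]
  have h0 : PowerSeries.derivative ℝ ((Nat.factorial 0 : ℝ)⁻¹ • f ^ 0) = 0 := by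
    simp
  rw [h0, add_zero]
  rw [Finset.sum_mul]
  refine Finset.sum_congr rfl fun k _ => ?_
  rw [Derivation.map_smul, Derivation.leibniz_pow]
  have : ((k+1) : ℕ) • ((f ^ (k + 1 - 1)) • (PowerSeries.derivative ℝ) f)
      = ((k+1 : ℝ)) • ((f ^ k) * (PowerSeries.derivative ℝ) f) := by
    rw [← Nat.cast_smul_eq_nsmul ℝ]
    norm_num [smul_eq_mul]
  rw [this, smul_smul, smul_mul_assoc]
  congr 1
  rw [Nat.factorial_succ]
  push_cast
  rw [mul_inv]
  field_simp

lemma expPS_rec (a : ℕ) (w : ℝ) (m : ℕ) :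
    ((m : ℝ) + 1) * PowerSeries.coeff (m+1) (expPS (PowerSeries.C w * gS a))
      = w * ∑ j ∈ Finset.Icc 1 (min a (m+1)),
          PowerSeries.coeff (m+1-j) (expPS (PowerSeries.C w * gS a)) := by
  set f := PowerSeries.C w * gS a with hfdef
  have hf : constantCoeff f = 0 := constC a w
  set E : ℕ → ℝ := fun i => PowerSeries.coeff i (expPS f) with hE
  have h1 : ((m:ℝ) + 1) * E (m+1)
      = PowerSeries.coeff m (PowerSeries.derivative ℝ
          (∑ k ∈ Finset.range (m + 2), (k.factorial : ℝ)⁻¹ • f ^ k)) := by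
    rw [PowerSeries.coeff_derivative, coeff_sum_range f hf (le_refl (m+1))]
    ring
  rw [h1, expPS_deriv_sum, PowerSeries.coeff_mul]
  rw [Finset.Nat.sum_antidiagonal_eq_sum_range_succ_mk]
  have h2 : ∀ k ∈ Finset.range (m+1),
      PowerSeries.coeff k (∑ k ∈ Finset.range (m + 1), (k.factorial : ℝ)⁻¹ • f ^ k)
        * PowerSeries.coeff (m - k) (PowerSeries.derivative ℝ f)
      = if m + 1 - k ≤ a then w * E k else 0 := by
    intro k hk
    rw [Finset.mem_range] at hk
    have : (m : ℕ) - k + 1 = m + 1 - k := by omega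
    rw [show (Finset.range (m+1)) = Finset.range (m + 1 - 1 + 1) by norm_num,
      coeff_sum_range f hf (by omega : k ≤ m + 1 - 1), coeff_D, this]
    by_cases h : m + 1 - k ≤ a <;> simp [h, mul_comm, hE]
  rw [Finset.sum_congr rfl h2, Finset.sum_ite, Finset.sum_const_zero, add_zero]
  rw [Finset.mul_sum]
  refine Finset.sum_nbij' (fun k => m + 1 - k) (fun j => m + 1 - j) ?_ ?_ ?_ ?_ ?_
  · intro k hk
    simp only [Finset.mem_filter, Finset.mem_range] at hk
    simp only [Finset.mem_Icc]
    omega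
  · intro j hj
    simp only [Finset.mem_Icc] at hj
    simp only [Finset.mem_filter, Finset.mem_range]
    omega
  · intro k hk
    simp only [Finset.mem_filter, Finset.mem_range] at hk
    omega
  · intro j hj
    simp only [Finset.mem_Icc] at hj
    omega
  · intro k hk
    simp only [Finset.mem_filter, Finset.mem_range] at hk
    have h3 : m + 1 - (m + 1 - k) = k := by omega
    simp only [h3, hE]


section Comb

open Finset Equiv Equiv.Perm

open scoped Classical

variable {ι : Type*} [Fintype ι] [DecidableEq ι]

/-- the weighted count of permutations with support in `s`, all cycles of length `≤ a`. -/
noncomputable def QQ (a : ℕ) (w : ℝ) (s : Finset ι) : ℝ :=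
  ∑ σ ∈ Finset.univ.filter
      (fun σ : Equiv.Perm ι => σ.support ⊆ s ∧ ∀ c ∈ σ.cycleType, c ≤ a),
    w ^ (Multiset.card σ.cycleType + (s.card - σ.support.card))

noncomputable def BB (a : ℕ) (s : Finset ι) (x : ι) : Finset (Equiv.Perm ι) :=
  Finset.univ.filter (fun c =>
    (c = 1 ∨ (c.IsCycle ∧ x ∈ c.support)) ∧ c.support ⊆ s ∧ c.support.card ≤ a)

noncomputable def jsize (c : Equiv.Perm ι) : ℕ := if c = 1 then 1 else c.support.card

lemma rho_apply (σ : Equiv.Perm ι) (x y : ι) :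
    (σ * (σ.cycleOf x)⁻¹) y = if σ.SameCycle x y then y else σ y := by
  rw [Equiv.Perm.mul_apply, Equiv.Perm.cycleOf_inv, Equiv.Perm.cycleOf_apply]
  by_cases h : σ.SameCycle x y
  · rw [if_pos (by rwa [Equiv.Perm.sameCycle_inv]), if_pos h]
    simp
  · rw [if_neg (by rwa [Equiv.Perm.sameCycle_inv]), if_neg h]

lemma disjoint_cycleOf_rho (σ : Equiv.Perm ι) (x : ι) :
    Equiv.Perm.Disjoint (σ.cycleOf x) (σ * (σ.cycleOf x)⁻¹) := by
  intro y
  by_cases h : σ.SameCycle x y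
  · right; rw [rho_apply, if_pos h]
  · left; exact Equiv.Perm.cycleOf_apply_of_not_sameCycle h

lemma cycleOf_mul_rho (σ : Equiv.Perm ι) (x : ι) :
    σ.cycleOf x * (σ * (σ.cycleOf x)⁻¹) = σ := by
  ext y
  rw [Equiv.Perm.mul_apply, rho_apply]
  by_cases h : σ.SameCycle x y
  · rw [if_pos h, Equiv.Perm.SameCycle.cycleOf_apply h]
  · rw [if_neg h, Equiv.Perm.cycleOf_apply_of_not_sameCycle]
    rwa [Equiv.Perm.sameCycle_apply_right]

lemma support_rho (σ : Equiv.Perm ι) (x : ι) :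
    (σ * (σ.cycleOf x)⁻¹).support = σ.support \ (σ.cycleOf x).support := by
  ext y
  simp only [Equiv.Perm.mem_support, Finset.mem_sdiff, rho_apply]
  by_cases h : σ.SameCycle x y
  · simp only [if_pos h]
    simp only [ne_eq, not_true_eq_false, false_iff, not_and, not_not]
    intro hy
    rw [Equiv.Perm.SameCycle.cycleOf_apply h]
    exact hy
  · simp only [if_neg h, ne_eq, Equiv.Perm.cycleOf_apply_of_not_sameCycle h]
    tauto

lemma card_s' {a : ℕ} {s : Finset ι} {x : ι} (hx : x ∈ s) {c : Equiv.Perm ι} (hc : c ∈ BB a s x) :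
    ((s \ c.support).erase x).card = s.card - jsize c := by
  rw [BB, Finset.mem_filter] at hc
  obtain ⟨-, h1, h2, -⟩ := hc
  rcases h1 with rfl | ⟨hcyc, hxc⟩
  · rw [jsize, if_pos rfl, Equiv.Perm.support_one, Finset.sdiff_empty,
      Finset.card_erase_of_mem hx]
  · rw [jsize, if_neg hcyc.ne_one, Finset.erase_eq_of_notMem (by simp [hxc]),
      Finset.card_sdiff_of_subset h2]

lemma QQ_inner_sum (a : ℕ) (w : ℝ) (s : Finset ι) (x : ι) (hx : x ∈ s)
    (c : Equiv.Perm ι) (hc : c ∈ BB a s x) :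
    ∑ σ ∈ (Finset.univ.filter
        (fun σ : Equiv.Perm ι => σ.support ⊆ s ∧ ∀ d ∈ σ.cycleType, d ≤ a)).filter
        (fun σ => σ.cycleOf x = c),
      w ^ (Multiset.card σ.cycleType + (s.card - σ.support.card))
      = w * QQ a w ((s \ c.support).erase x) := by
  set s' := (s \ c.support).erase x with hs'
  have hs'sub : s' ⊆ s := (Finset.erase_subset _ _).trans (Finset.sdiff_subset)
  have hxs' : x ∉ s' := Finset.notMem_erase _ _
  have hcards' : s'.card = s.card - jsize c := card_s' hx hc
  rw [BB, Finset.mem_filter] at hc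
  obtain ⟨-, hone, hcsub, hca⟩ := hc
  rw [QQ, Finset.mul_sum]
  refine Finset.sum_nbij' (fun σ => σ * c⁻¹) (fun ρ => c * ρ) ?_ ?_ ?_ ?_ ?_
  · -- maps to
    intro σ hσ
    simp only [Finset.mem_filter, Finset.mem_univ, true_and] at hσ ⊢
    obtain ⟨⟨hsub, hcyc⟩, hcx⟩ := hσ
    subst hcx
    have hsupp := support_rho σ x
    constructor
    · intro y hy
      rw [hsupp, Finset.mem_sdiff] at hy
      refine Finset.mem_erase.mpr ⟨?_, Finset.mem_sdiff.mpr ⟨hsub hy.1, hy.2⟩⟩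
      rintro rfl
      exact hy.2 (Equiv.Perm.mem_support_cycleOf_iff.mpr ⟨Equiv.Perm.SameCycle.refl _ _, hy.1⟩)
    · intro d hd
      refine hcyc d ?_
      rw [← cycleOf_mul_rho σ x, (disjoint_cycleOf_rho σ x).cycleType_mul]
      exact Multiset.mem_add.mpr (Or.inr hd)
  · -- reverse maps to
    intro ρ hρ
    simp only [Finset.mem_filter, Finset.mem_univ, true_and] at hρ ⊢
    obtain ⟨hsub, hcyc⟩ := hρ
    have hdisj : Equiv.Perm.Disjoint c ρ := by
      rw [Equiv.Perm.disjoint_iff_disjoint_support, Finset.disjoint_left]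
      intro y hy hy2
      have := hsub hy2
      rw [hs', Finset.mem_erase, Finset.mem_sdiff] at this
      exact this.2.2 hy
    have hρx : ρ x = x := by
      by_contra h
      exact hxs' (hsub (Equiv.Perm.mem_support.mpr h))
    have hcyOf : (c * ρ).cycleOf x = c := by
      rw [Equiv.Perm.cycleOf_mul_of_apply_right_eq_self hdisj.commute x hρx]
      rcases hone with rfl | ⟨hcyc2, hxc⟩
      · exact Equiv.Perm.cycleOf_one x
      · exact hcyc2.cycleOf_eq (Equiv.Perm.mem_support.mp hxc)
    refine ⟨⟨?_, ?_⟩, hcyOf⟩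
    · rw [hdisj.support_mul]
      exact Finset.union_subset hcsub ((hsub.trans hs'sub))
    · intro d hd
      rw [hdisj.cycleType_mul, Multiset.mem_add] at hd
      rcases hd with hd | hd
      · rcases hone with rfl | ⟨hcyc2, -⟩
        · simp [Equiv.Perm.cycleType_one] at hd
        · rw [hcyc2.cycleType] at hd
          simp only [Multiset.coe_singleton, Multiset.mem_singleton] at hd
          omega
      · exact hcyc d hd
  · -- left inverse
    intro σ hσ
    simp only [Finset.mem_filter] at hσ
    show c * (σ * c⁻¹) = σ
    rw [← hσ.2]
    exact cycleOf_mul_rho σ x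
  · -- right inverse
    intro ρ hρ
    have hdisj : Equiv.Perm.Disjoint c ρ := by
      simp only [Finset.mem_filter, Finset.mem_univ, true_and] at hρ
      rw [Equiv.Perm.disjoint_iff_disjoint_support, Finset.disjoint_left]
      intro y hy hy2
      have := hρ.1 hy2
      rw [hs', Finset.mem_erase, Finset.mem_sdiff] at this
      exact this.2.2 hy
    show (c * ρ) * c⁻¹ = ρ
    rw [hdisj.commute.eq, mul_inv_cancel_right]
  · -- weights
    intro σ hσ
    simp only [Finset.mem_filter, Finset.mem_univ, true_and] at hσ
    obtain ⟨⟨hsub, hcyc⟩, hcx⟩ := hσ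
    beta_reduce
    have hdisj : Equiv.Perm.Disjoint c (σ * c⁻¹) := by
      rw [← hcx]; exact disjoint_cycleOf_rho σ x
    have hmul : c * (σ * c⁻¹) = σ := by rw [← hcx]; exact cycleOf_mul_rho σ x
    have hct := hdisj.cycleType_mul
    rw [hmul] at hct
    have hsup := hdisj.support_mul
    rw [hmul] at hsup
    have hsupc : σ.support.card = c.support.card + (σ * c⁻¹).support.card := by
      rw [hsup, Finset.card_union_of_disjoint
        (Equiv.Perm.disjoint_iff_disjoint_support.mp hdisj)]
    have hctc : Multiset.card σ.cycleType
        = Multiset.card c.cycleType + Multiset.card (σ * c⁻¹).cycleType := by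
      rw [hct, Multiset.card_add]
    have hsub' : (σ * c⁻¹).support ⊆ s' := by
      rw [← hcx]
      rw [hs', ← hcx]
      intro y hy
      rw [support_rho, Finset.mem_sdiff] at hy
      refine Finset.mem_erase.mpr ⟨?_, Finset.mem_sdiff.mpr ⟨hsub hy.1, hy.2⟩⟩
      rintro rfl
      exact hy.2 (Equiv.Perm.mem_support_cycleOf_iff.mpr ⟨Equiv.Perm.SameCycle.refl _ _, hy.1⟩)
    have h1 : (σ * c⁻¹).support.card ≤ s'.card := Finset.card_le_card hsub'
    have h2 : σ.support.card ≤ s.card := Finset.card_le_card hsub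
    have hkey : Multiset.card c.cycleType + jsize c = 1 + c.support.card := by
      rcases hone with rfl | ⟨hcyc2, -⟩
      · simp [jsize]
      · rw [jsize, if_neg hcyc2.ne_one, Equiv.Perm.card_cycleType_eq_one.mpr hcyc2]
    have h4 : 1 ≤ jsize c := by
      rcases hone with rfl | ⟨hcyc2, hxc⟩
      · simp [jsize]
      · rw [jsize, if_neg hcyc2.ne_one]
        have := hcyc2.two_le_card_support
        omega
    have h5 : jsize c ≤ s.card := by
      rcases hone with rfl | ⟨hcyc2, hxc⟩
      · rw [jsize, if_pos rfl]
        exact Finset.card_pos.mpr ⟨x, hx⟩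
      · rw [jsize, if_neg hcyc2.ne_one]
        exact Finset.card_le_card hcsub
    rw [← pow_succ']
    congr 1
    omega

lemma cycleOf_mem_BB (a : ℕ) (s : Finset ι) (x : ι)
    (σ : Equiv.Perm ι) (hsub : σ.support ⊆ s) (hcyc : ∀ d ∈ σ.cycleType, d ≤ a) :
    σ.cycleOf x ∈ BB a s x := by
  rw [BB, Finset.mem_filter]
  refine ⟨Finset.mem_univ _, ?_, (Equiv.Perm.support_cycleOf_le σ x).trans hsub, ?_⟩
  · by_cases h : σ x = x
    · exact Or.inl ((Equiv.Perm.cycleOf_eq_one_iff σ).mpr h)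
    · exact Or.inr ⟨Equiv.Perm.isCycle_cycleOf σ h,
        Equiv.Perm.mem_support_cycleOf_iff.mpr
          ⟨Equiv.Perm.SameCycle.refl _ _, Equiv.Perm.mem_support.mpr h⟩⟩
  · by_cases h : σ x = x
    · rw [(Equiv.Perm.cycleOf_eq_one_iff σ).mpr h]
      simp
    · refine hcyc _ ?_
      rw [Equiv.Perm.cycleType_def]
      exact Multiset.mem_map_of_mem _
        (Equiv.Perm.cycleOf_mem_cycleFactorsFinset_iff.mpr (Equiv.Perm.mem_support.mpr h))

lemma QQ_eq_sum_BB (a : ℕ) (w : ℝ) (s : Finset ι) (x : ι) (hx : x ∈ s) :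
    QQ a w s = ∑ c ∈ BB a s x, w * QQ a w ((s \ c.support).erase x) := by
  rw [QQ, ← Finset.sum_fiberwise_of_maps_to (g := fun σ => σ.cycleOf x)
    (fun σ hσ => by
      simp only [Finset.mem_filter, Finset.mem_univ, true_and] at hσ
      exact cycleOf_mem_BB a s x σ hσ.1 hσ.2)]
  exact Finset.sum_congr rfl fun c hc => QQ_inner_sum a w s x hx c hc

lemma BB_filter_card_one (a : ℕ) (s : Finset ι) (x : ι) :
    (BB a s x).filter (fun c => jsize c = 1) = {1} := by
  ext c
  simp only [Finset.mem_filter, Finset.mem_singleton, BB, Finset.mem_univ, true_and]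
  constructor
  · rintro ⟨⟨h1 | ⟨hcyc, -⟩, -, -⟩, hj⟩
    · exact h1
    · rw [jsize, if_neg hcyc.ne_one] at hj
      have := hcyc.two_le_card_support
      omega
  · rintro rfl
    simp [jsize]

lemma BB_filter_card_big (a : ℕ) (s : Finset ι) (x : ι) (hx : x ∈ s) (j : ℕ) (hj2 : 2 ≤ j) (hja : j ≤ a) :
    ((BB a s x).filter (fun c => c.support.card = j ∧ c ≠ 1)).card
      = Fintype.card (Fin (j-1) ↪ {y : ι // y ∈ s.erase x}) := by
  rw [← Finset.card_univ]
  refine Finset.card_bij'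
    (fun c hc => ⟨fun k => ⟨(c ^ ((k : ℕ)+1)) x, by
      simp only [Finset.mem_filter, BB, Finset.mem_univ, true_and] at hc
      obtain ⟨⟨h1, hsub, -⟩, hcard, hne⟩ := hc
      rcases h1 with rfl | ⟨hcyc, hxc⟩
      · exact absurd rfl hne
      have hlen : (c.toList x).length = j := by
        rw [Equiv.Perm.length_toList, hcyc.cycleOf_eq (Equiv.Perm.mem_support.mp hxc), hcard]
      have hklt : (k : ℕ) + 1 < (c.toList x).length := by
        have := k.2; omega
      have hget : (c.toList x).get ⟨(k : ℕ)+1, hklt⟩ = (c ^ ((k : ℕ)+1)) x :=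
        Equiv.Perm.getElem_toList _ _ _ _
      rw [Finset.mem_erase]
      constructor
      · intro h
        have h0 : (c.toList x).get ⟨0, by omega⟩ = x := Equiv.Perm.toList_getElem_zero c x hxc
        have : ((c.toList x).get ⟨(k : ℕ)+1, hklt⟩) = (c.toList x).get ⟨0, by omega⟩ := by
          rw [hget, h0, h]
        have := (Equiv.Perm.nodup_toList c x).get_inj_iff.mp this
        simp at this
      · exact hsub (Equiv.Perm.pow_apply_mem_support.mpr hxc)⟩, by
      -- injectivity
      intro p q hpq
      simp only [Finset.mem_filter, BB, Finset.mem_univ, true_and] at hc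
      obtain ⟨⟨h1, hsub, -⟩, hcard, hne⟩ := hc
      rcases h1 with rfl | ⟨hcyc, hxc⟩
      · exact absurd rfl hne
      have hlen : (c.toList x).length = j := by
        rw [Equiv.Perm.length_toList, hcyc.cycleOf_eq (Equiv.Perm.mem_support.mp hxc), hcard]
      have hplt : (p : ℕ) + 1 < (c.toList x).length := by have := p.2; omega
      have hqlt : (q : ℕ) + 1 < (c.toList x).length := by have := q.2; omega
      rw [Subtype.ext_iff] at hpq
      simp only at hpq
      have : (c.toList x).get ⟨(p : ℕ)+1, hplt⟩ = (c.toList x).get ⟨(q : ℕ)+1, hqlt⟩ := by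
        rw [List.get_eq_getElem, List.get_eq_getElem, Equiv.Perm.getElem_toList, Equiv.Perm.getElem_toList]
        exact hpq
      have := (Equiv.Perm.nodup_toList c x).get_inj_iff.mp this
      simp only [Fin.mk.injEq, Nat.add_right_cancel_iff] at this
      exact Fin.ext this⟩)
    (fun f _ => List.formPerm (x :: List.ofFn (fun k => ((f k : ι)))))
    ?_ ?_ ?_ ?_
  · intro c hc
    exact Finset.mem_univ _
  · -- backward maps into the filter
    intro f _
    have hinj : Function.Injective (fun k : Fin (j-1) => ((f k : ι))) :=
      fun p q h => f.injective (Subtype.ext h)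
    have hxnot : x ∉ List.ofFn (fun k : Fin (j-1) => ((f k : ι))) := by
      rw [List.mem_ofFn]
      rintro ⟨k, hk⟩
      exact (Finset.ne_of_mem_erase (f k).2) hk
    have hnodup : (x :: List.ofFn (fun k : Fin (j-1) => ((f k : ι)))).Nodup :=
      List.nodup_cons.mpr ⟨hxnot, List.nodup_ofFn.mpr hinj⟩
    have hlenL : (x :: List.ofFn (fun k : Fin (j-1) => ((f k : ι)))).length = j := by
      simp only [List.length_cons, List.length_ofFn]
      omega
    have hne_single : ∀ y : ι, (x :: List.ofFn (fun k : Fin (j-1) => ((f k : ι)))) ≠ [y] := by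
      intro y h
      apply_fun List.length at h
      rw [hlenL] at h
      simp at h
      omega
    have h2len : 2 ≤ (x :: List.ofFn (fun k : Fin (j-1) => ((f k : ι)))).length := by omega
    have hcyc := List.isCycle_formPerm hnodup h2len
    have hsupp := List.support_formPerm_of_nodup _ hnodup hne_single
    have hsubs : (List.formPerm (x :: List.ofFn (fun k : Fin (j-1) => ((f k : ι))))).support ⊆ s := by
      rw [hsupp]
      intro y hy
      rw [List.mem_toFinset, List.mem_cons] at hy
      rcases hy with rfl | hy
      · exact hx
      · rw [List.mem_ofFn] at hy
        obtain ⟨k, hk⟩ := hy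
        have hk' : ((f k : ι)) = y := hk
        exact Finset.mem_of_mem_erase (hk' ▸ (f k).2)
    have hcard : (List.formPerm (x :: List.ofFn (fun k : Fin (j-1) => ((f k : ι))))).support.card = j := by
      rw [hsupp, List.toFinset_card_of_nodup hnodup, hlenL]
    simp only [Finset.mem_filter, BB, Finset.mem_univ, true_and]
    refine ⟨⟨Or.inr ⟨hcyc, ?_⟩, hsubs, by rw [hcard]; exact hja⟩, hcard, hcyc.ne_one⟩
    rw [hsupp, List.mem_toFinset]
    exact List.mem_cons_self
  · -- left inverse
    intro c hc
    simp only [Finset.mem_filter, BB, Finset.mem_univ, true_and] at hc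
    obtain ⟨⟨h1, hsub, -⟩, hcard, hne⟩ := hc
    rcases h1 with rfl | ⟨hcyc, hxc⟩
    · exact absurd rfl hne
    have hlen : (c.toList x).length = j := by
      rw [Equiv.Perm.length_toList, hcyc.cycleOf_eq (Equiv.Perm.mem_support.mp hxc), hcard]
    change (x :: List.ofFn fun k : Fin (j-1) => (c ^ ((k : ℕ)+1)) x).formPerm = c
    have hlist : (x :: List.ofFn fun k : Fin (j-1) => (c ^ ((k : ℕ)+1)) x) = c.toList x := by
      refine List.ext_getElem (by simp [hlen]; omega) ?_
      intro i hi hi'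
      rcases i with _ | i
      · rw [List.getElem_cons_zero]
        have h0 := Equiv.Perm.toList_getElem_zero c x hxc
        exact h0.symm
      · rw [List.getElem_cons_succ, List.getElem_ofFn]
        have hg := Equiv.Perm.getElem_toList c x (i+1) hi'
        rw [hg]
    rw [hlist, Equiv.Perm.formPerm_toList, hcyc.cycleOf_eq (Equiv.Perm.mem_support.mp hxc)]
  · -- right inverse
    intro f _
    have hinj : Function.Injective (fun k : Fin (j-1) => ((f k : ι))) :=
      fun p q h => f.injective (Subtype.ext h)
    have hxnot : x ∉ List.ofFn (fun k : Fin (j-1) => ((f k : ι))) := by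
      rw [List.mem_ofFn]
      rintro ⟨k, hk⟩
      exact (Finset.ne_of_mem_erase (f k).2) hk
    have hnodup : (x :: List.ofFn (fun k : Fin (j-1) => ((f k : ι)))).Nodup :=
      List.nodup_cons.mpr ⟨hxnot, List.nodup_ofFn.mpr hinj⟩
    have hlenL : (x :: List.ofFn (fun k : Fin (j-1) => ((f k : ι)))).length = j := by
      simp only [List.length_cons, List.length_ofFn]
      omega
    ext k
    change ((x :: List.ofFn (fun k : Fin (j-1) => ((f k : ι)))).formPerm ^ ((k : ℕ)+1)) x = (f k : ι)
    have h0 : (x :: List.ofFn (fun k : Fin (j-1) => ((f k : ι))))[0] = x := rfl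
    have := List.formPerm_pow_apply_getElem _ hnodup ((k : ℕ)+1) 0 (by omega)
    rw [h0] at this
    rw [this]
    have hklt : (0 + ((k : ℕ)+1)) % (x :: List.ofFn (fun k : Fin (j-1) => ((f k : ι)))).length
        = (k : ℕ) + 1 := by
      rw [hlenL, Nat.zero_add, Nat.mod_eq_of_lt (by have := k.2; omega)]
    simp only [hklt, List.getElem_cons_succ, List.getElem_ofFn]

lemma jsize_mem (a : ℕ) (ha : 1 ≤ a) (s : Finset ι) (x : ι) (hx : x ∈ s)
    {c : Equiv.Perm ι} (hc : c ∈ BB a s x) :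
    jsize c ∈ Finset.Icc 1 (min a s.card) := by
  rw [BB, Finset.mem_filter] at hc
  obtain ⟨-, h1, hsub, hca⟩ := hc
  rw [Finset.mem_Icc, le_min_iff]
  rcases h1 with rfl | ⟨hcyc, hxc⟩
  · have hj1 : jsize (1 : Equiv.Perm ι) = 1 := by simp [jsize]
    rw [hj1]
    exact ⟨le_refl _, ha, Finset.card_pos.mpr ⟨x, hx⟩⟩
  · rw [jsize, if_neg hcyc.ne_one]
    have := hcyc.two_le_card_support
    exact ⟨by omega, hca, Finset.card_le_card hsub⟩

lemma BB_sum (a : ℕ) (ha : 1 ≤ a) (s : Finset ι) (x : ι) (hx : x ∈ s) (F : ℕ → ℝ) :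
    ∑ c ∈ BB a s x, F (jsize c)
      = ∑ j ∈ Finset.Icc 1 (min a s.card), ((s.card - 1).descFactorial (j-1) : ℝ) * F j := by
  rw [← Finset.sum_fiberwise_of_maps_to (g := jsize) (fun c hc => jsize_mem a ha s x hx hc)]
  refine Finset.sum_congr rfl fun j hj => ?_
  have hinner : ∀ c ∈ (BB a s x).filter (fun c => jsize c = j), F (jsize c) = F j := by
    intro c hc
    rw [(Finset.mem_filter.mp hc).2]
  rw [Finset.sum_congr rfl hinner, Finset.sum_const, nsmul_eq_mul]
  congr 1
  rw [Finset.mem_Icc, le_min_iff] at hj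
  obtain ⟨hj1, hja, hjs⟩ := hj
  rcases Nat.lt_or_ge j 2 with hj2 | hj2
  · have : j = 1 := by omega
    subst this
    rw [BB_filter_card_one, Finset.card_singleton]
    simp
  · have hset : (BB a s x).filter (fun c => jsize c = j)
        = (BB a s x).filter (fun c => c.support.card = j ∧ c ≠ 1) := by
      apply Finset.filter_congr
      intro c hc
      rw [BB, Finset.mem_filter] at hc
      obtain ⟨-, h1, -, -⟩ := hc
      rcases h1 with rfl | ⟨hcyc, -⟩
      · have hj1 : jsize (1 : Equiv.Perm ι) = 1 := by simp [jsize]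
        rw [hj1]
        constructor
        · intro h; omega
        · rintro ⟨-, h⟩; exact absurd rfl h
      · simp only [jsize, if_neg hcyc.ne_one]
        simp [hcyc.ne_one]
    rw [hset, BB_filter_card_big a s x hx j hj2 hja, Fintype.card_embedding_eq,
      Fintype.card_fin, Fintype.card_coe, Finset.card_erase_of_mem hx]

lemma QQ_main (a : ℕ) (ha : 1 ≤ a) (w : ℝ) (E : ℕ → ℝ) (hE0 : E 0 = 1)
    (hrec : ∀ m : ℕ, ((m : ℝ) + 1) * E (m+1)
      = w * ∑ j ∈ Finset.Icc 1 (min a (m+1)), E (m+1-j)) :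
    ∀ s : Finset ι, QQ a w s = (s.card.factorial : ℝ) * E s.card := by
  intro s
  induction s using Finset.strongInduction with
  | _ s IH =>
  rcases Finset.eq_empty_or_nonempty s with rfl | ⟨x, hx⟩
  · have hfilt : (Finset.univ.filter
        (fun σ : Equiv.Perm ι => σ.support ⊆ (∅ : Finset ι) ∧ ∀ c ∈ σ.cycleType, c ≤ a))
        = {1} := by
      ext σ
      simp only [Finset.mem_filter, Finset.mem_univ, true_and, Finset.mem_singleton,
        Finset.subset_empty, Equiv.Perm.support_eq_empty_iff]
      constructor
      · exact fun h => h.1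
      · rintro rfl
        simp [Equiv.Perm.cycleType_one]
    rw [QQ, hfilt, Finset.sum_singleton]
    simp [Equiv.Perm.cycleType_one, hE0]
  · obtain ⟨m, hm⟩ : ∃ m, s.card = m + 1 :=
      Nat.exists_eq_succ_of_ne_zero (Finset.card_pos.mpr ⟨x, hx⟩).ne'
    rw [QQ_eq_sum_BB a w s x hx]
    have hterm : ∀ c ∈ BB a s x, w * QQ a w ((s \ c.support).erase x)
        = (fun j => w * (((s.card - j).factorial : ℝ) * E (s.card - j))) (jsize c) := by
      intro c hc
      have hss : (s \ c.support).erase x ⊂ s :=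
        (Finset.ssubset_iff_of_subset
          ((Finset.erase_subset _ _).trans Finset.sdiff_subset)).mpr
          ⟨x, hx, Finset.notMem_erase _ _⟩
      rw [IH _ hss, card_s' hx hc]
    rw [Finset.sum_congr rfl hterm, BB_sum a ha s x hx (fun j => w * (((s.card - j).factorial : ℝ) * E (s.card - j))), hm]
    have hper : ∀ j ∈ Finset.Icc 1 (min a (m+1)),
        ((m + 1 - 1).descFactorial (j-1) : ℝ)
            * (w * (((m + 1 - j).factorial : ℝ) * E (m+1-j)))
        = w * (m.factorial : ℝ) * E (m+1-j) := by
      intro j hj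
      rw [Finset.mem_Icc, le_min_iff] at hj
      have hfac : (m + 1 - j).factorial * m.descFactorial (j - 1) = m.factorial := by
        rw [show m + 1 - j = m - (j - 1) by omega]
        exact Nat.factorial_mul_descFactorial (by omega)
      rw [show m + 1 - 1 = m by omega, ← hfac]
      push_cast
      ring
    rw [Finset.sum_congr rfl hper, ← Finset.mul_sum,
      show w * (m.factorial : ℝ) * (∑ j ∈ Finset.Icc 1 (min a (m+1)), E (m+1-j))
        = (m.factorial : ℝ) * (w * ∑ j ∈ Finset.Icc 1 (min a (m+1)), E (m+1-j)) by ring,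
      ← hrec m, Nat.factorial_succ]
    push_cast
    ring


end Comb

open scoped Classical in
/-- For `α : ℕ → ℕ` with `α(n) ≥ 1` and any real `w`,
`∑_{σ ∈ S_{n,α}} w^{C(σ)} = n! · [z^n] exp(w ∑_{j=1}^{α(n)} z^j / j)`; in
particular `|S_{n,α}| = n! · [z^n] exp(∑_{j=1}^{α(n)} z^j / j)`. -/
theorem stmt_6 (α : ℕ → ℕ) (hα : ∀ n, 1 ≤ α n) (n : ℕ) (w : ℝ) :
    (∑ σ ∈ Snalpha n (α n), w ^ numCycles σ
      = n.factorial * PowerSeries.coeff n (expPS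
          (PowerSeries.C w *
            ∑ j ∈ Finset.Icc 1 (α n), PowerSeries.C (j : ℝ)⁻¹ * PowerSeries.X ^ j))) ∧
    ((Snalpha n (α n)).card : ℝ)
      = n.factorial * PowerSeries.coeff n (expPS
          (∑ j ∈ Finset.Icc 1 (α n), PowerSeries.C (j : ℝ)⁻¹ * PowerSeries.X ^ j)) := by
  have key : ∀ v : ℝ, ∑ σ ∈ Snalpha n (α n), v ^ numCycles σ
      = n.factorial * PowerSeries.coeff n (expPS (PowerSeries.C v * gS (α n))) := by
    intro v
    have hrec := expPS_rec (α n) v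
    have hmain := QQ_main (ι := Fin n) (α n) (hα n) v
      (fun m => PowerSeries.coeff m (expPS (PowerSeries.C v * gS (α n))))
      (expPS_coeff_zero _) hrec (Finset.univ : Finset (Fin n))
    have hcards : (Finset.univ : Finset (Fin n)).card = n := Finset.card_fin n
    rw [hcards] at hmain
    rw [← hmain, QQ]
    refine Finset.sum_congr ?_ ?_
    · ext σ
      simp [Snalpha, Finset.subset_univ]
    · intro σ hσ
      congr 1
      rw [numCycles]
      congr 1
      have hfix : (Finset.univ.filter fun i => σ i = i)
          = (Finset.univ : Finset (Fin n)) \ σ.support := by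
        ext i
        simp [Equiv.Perm.mem_support, not_not]
      rw [hfix, Finset.card_sdiff_of_subset (Finset.subset_univ _), Finset.card_fin]
  constructor
  · rw [show (∑ j ∈ Finset.Icc 1 (α n), PowerSeries.C (j : ℝ)⁻¹ * PowerSeries.X ^ j)
      = gS (α n) from rfl]
    exact key w
  · have h1 := key 1
    simp only [one_pow, Finset.sum_const, nsmul_eq_mul, mul_one] at h1
    rw [show (∑ j ∈ Finset.Icc 1 (α n), PowerSeries.C (j : ℝ)⁻¹ * PowerSeries.X ^ j)
      = gS (α n) from rfl]
    rw [h1, map_one, one_mul]
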